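/- arXiv:2507.15410 — 6 statements merged into one kernel-verified Lean document; each statement's English description precedes it below -/
import Mathlib

section
/- Let a, μ > 0, γ > 0, p > 1, t ≥ 0 and r ≥ 0 be real numbers, and let M ≥ r. Then (1 + ((a/μ) r^γ)^{1/(p-1)} · (γ/(p-1)) · t)^{(p-1)/γ} ≤ max{1, ((a/μ) M^γ)^{1/γ}} · e^t. -/
/-- Elementary inequality:
    `(1 + ((a/μ) r^γ)^{1/(p-1)} (γ/(p-1)) t)^{(p-1)/γ} ≤ max{1, ((a/μ) M^γ)^{1/γ}} e^t`
    for `a, μ > 0`, `γ > 0`, `p > 1`, `t ≥ 0`, `0 ≤ r ≤ M`. -/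
theorem density_lower_bound_key (a μ γ p t r M : ℝ) (ha : 0 < a) (hμ : 0 < μ)
    (hγ : 0 < γ) (hp : 1 < p) (ht : 0 ≤ t) (hr : 0 ≤ r) (hM : r ≤ M) :
    (1 + ((a / μ) * r ^ γ) ^ (1 / (p - 1)) * (γ / (p - 1)) * t) ^ ((p - 1) / γ)
      ≤ max 1 (((a / μ) * M ^ γ) ^ (1 / γ)) * Real.exp t := by
  have hp1 : (0:ℝ) < p - 1 := by linarith
  set X : ℝ := (a / μ) * r ^ γ with hXdef
  set Y : ℝ := (a / μ) * M ^ γ with hYdef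
  have haμ : 0 < a / μ := div_pos ha hμ
  have hX0 : 0 ≤ X := mul_nonneg haμ.le (Real.rpow_nonneg hr γ)
  have hXY : X ≤ Y :=
    mul_le_mul_of_nonneg_left (Real.rpow_le_rpow hr hM hγ.le) haμ.le
  have hY0 : 0 ≤ Y := hX0.trans hXY
  set c : ℝ := X ^ (1 / (p - 1)) with hcdef
  have hc0 : 0 ≤ c := Real.rpow_nonneg hX0 _
  set s : ℝ := (γ / (p - 1)) * t with hsdef
  have hs0 : 0 ≤ s := mul_nonneg (div_pos hγ hp1).le ht
  set β : ℝ := (p - 1) / γ with hβdef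
  have hβ0 : 0 ≤ β := (div_pos hp1 hγ).le
  have hcs : c * (γ / (p - 1)) * t = c * s := by ring
  -- step 1: 1 + c*s ≤ max 1 c * (1 + s)
  have h1 : 1 + c * s ≤ max 1 c * (1 + s) := by
    rcases le_total c 1 with h | h
    · rw [max_eq_left h]
      nlinarith
    · rw [max_eq_right h]
      nlinarith
  have hmax0 : (0:ℝ) ≤ max 1 c := le_max_of_le_left zero_le_one
  have h1s : (0:ℝ) ≤ 1 + s := by linarith
  have hLHS0 : (0:ℝ) ≤ 1 + c * s := by positivity
  -- step 2: rpow the inequality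
  have h2 : (1 + c * s) ^ β ≤ (max 1 c) ^ β * (1 + s) ^ β := by
    calc (1 + c * s) ^ β ≤ (max 1 c * (1 + s)) ^ β :=
          Real.rpow_le_rpow hLHS0 h1 hβ0
      _ = (max 1 c) ^ β * (1 + s) ^ β := Real.mul_rpow hmax0 h1s
  -- step 3: (1+s)^β ≤ exp t
  have h3 : (1 + s) ^ β ≤ Real.exp t := by
    have hst : s * β = t := by
      rw [hsdef, hβdef]
      field_simp [hp1.ne', hγ.ne']
    calc (1 + s) ^ β ≤ (Real.exp s) ^ β :=
          Real.rpow_le_rpow h1s (by linarith [Real.add_one_le_exp s]) hβ0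
      _ = Real.exp t := by
          rw [Real.rpow_def_of_pos (Real.exp_pos s), Real.log_exp, hst]
  -- step 4: (max 1 c)^β ≤ max 1 (Y^(1/γ))
  have h4 : (max 1 c) ^ β ≤ max 1 (Y ^ (1 / γ)) := by
    rcases le_total c 1 with h | h
    · rw [max_eq_left h, Real.one_rpow]
      exact le_max_left _ _
    · rw [max_eq_right h]
      have hcβ : c ^ β = X ^ (1 / γ) := by
        rw [hcdef, ← Real.rpow_mul hX0]
        congr 1
        rw [hβdef]
        field_simp
      rw [hcβ]
      exact le_max_of_le_right (Real.rpow_le_rpow hX0 hXY (by positivity))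
  calc (1 + c * (γ / (p - 1)) * t) ^ β = (1 + c * s) ^ β := by rw [hcs]
    _ ≤ (max 1 c) ^ β * (1 + s) ^ β := h2
    _ ≤ max 1 (Y ^ (1 / γ)) * Real.exp t := by
        apply mul_le_mul h4 h3 (Real.rpow_nonneg h1s β)
        exact le_max_of_le_left zero_le_one
end

section
/- Let p > 1, γ > 0, a, μ > 0, ϱ₀ > 0, t ≥ 0 be real numbers and let R > 0 satisfy R^{-γ/(p-1)} ≤ (a/μ)^{1/(p-1)} (e^{γt/(p-1)} − 1) + ϱ₀^{-γ/(p-1)} e^{γt/(p-1)}. Then R ≥ ϱ₀ e^{-2t} / max{1, ((a/μ) ϱ₀^γ)^{1/γ}}. -/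
/-- Lower bound for the density along characteristics: if
    `R^{-γ/(p-1)} ≤ (a/μ)^{1/(p-1)}(e^{γt/(p-1)} − 1) + ϱ₀^{-γ/(p-1)} e^{γt/(p-1)}`,
    then `R ≥ ϱ₀ e^{-2t} / max{1, ((a/μ)ϱ₀^γ)^{1/γ}}`. -/
theorem density_lower_bound (p γ a μ ϱ₀ t R : ℝ) (hp : 1 < p) (hγ : 0 < γ)
    (ha : 0 < a) (hμ : 0 < μ) (hϱ₀ : 0 < ϱ₀) (ht : 0 ≤ t) (hR : 0 < R)
    (h : R ^ (-(γ / (p - 1))) ≤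
      (a / μ) ^ (1 / (p - 1)) * (Real.exp (γ * t / (p - 1)) - 1)
        + ϱ₀ ^ (-(γ / (p - 1))) * Real.exp (γ * t / (p - 1))) :
    ϱ₀ * Real.exp (-(2 * t)) / max 1 (((a / μ) * ϱ₀ ^ γ) ^ (1 / γ)) ≤ R := by
  have hq0 : 0 < p - 1 := by linarith
  set q := p - 1 with hqdef
  set α := γ / q with hαdef
  have hα0 : 0 < α := div_pos hγ hq0
  set s := γ * t / q with hsdef
  have hs0 : 0 ≤ s := by positivity
  have hc : 0 < a / μ := div_pos ha hμ
  have hϱγ : 0 < ϱ₀ ^ γ := Real.rpow_pos_of_pos hϱ₀ γ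
  set b := (a / μ) * ϱ₀ ^ γ with hbdef
  have hb0 : 0 < b := mul_pos hc hϱγ
  set m := max 1 (b ^ (1 / q)) with hmdef
  have hm1 : (1 : ℝ) ≤ m := le_max_left _ _
  have hm0 : 0 < m := lt_of_lt_of_le one_pos hm1
  set M := max 1 (b ^ (1 / γ)) with hMdef
  have hM1 : (1 : ℝ) ≤ M := le_max_left _ _
  have hM0 : 0 < M := lt_of_lt_of_le one_pos hM1
  -- M ^ α = m
  have hbq : (b ^ (1 / γ)) ^ α = b ^ (1 / q) := by
    rw [← Real.rpow_mul hb0.le]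
    congr 1
    field_simp [hαdef]
    have := hq0.ne'
    rw [hαdef]; field_simp
  have hMα : M ^ α = m := by
    rcases le_total (b ^ (1 / γ)) 1 with hle | hle
    · have h1 : M = 1 := max_eq_left hle
      have h2 : (b ^ (1 / γ)) ^ α ≤ 1 :=
        Real.rpow_le_one (Real.rpow_nonneg hb0.le _) hle hα0.le
      rw [hbq] at h2
      rw [h1, Real.one_rpow, hmdef, max_eq_left h2]
    · have h1 : M = b ^ (1 / γ) := max_eq_right hle
      have h2 : 1 ≤ (b ^ (1 / γ)) ^ α := Real.one_le_rpow hle hα0.le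
      rw [hbq] at h2
      rw [h1, hbq, hmdef, max_eq_right h2]
  -- key algebraic identity: (a/μ)^{1/q} = ϱ₀^{-α} * b^{1/q}
  have hbsplit : b ^ (1 / q) = (a / μ) ^ (1 / q) * ϱ₀ ^ α := by
    rw [hbdef, Real.mul_rpow hc.le hϱγ.le, ← Real.rpow_mul hϱ₀.le]
    congr 2
    field_simp [hαdef]
    have := hq0.ne'
    rw [hαdef]; field_simp
  have hcancel : ϱ₀ ^ (-α) * ϱ₀ ^ α = 1 := by
    rw [← Real.rpow_add hϱ₀]; simp
  have hcq : (a / μ) ^ (1 / q) = ϱ₀ ^ (-α) * b ^ (1 / q) := by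
    rw [hbsplit]
    rw [show ϱ₀ ^ (-α) * ((a / μ) ^ (1 / q) * ϱ₀ ^ α)
        = (a / μ) ^ (1 / q) * (ϱ₀ ^ (-α) * ϱ₀ ^ α) by ring, hcancel, mul_one]
  -- e^s - 1 ≤ s * e^s
  have hexp1 : Real.exp s - 1 ≤ s * Real.exp s := by
    have h1 : (-s) + 1 ≤ Real.exp (-s) := Real.add_one_le_exp (-s)
    have h2 : Real.exp (-s) * Real.exp s = 1 := by
      rw [← Real.exp_add]; simp
    nlinarith [Real.exp_pos s]
  have hexp2 : 1 + s ≤ Real.exp s := by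
    have := Real.add_one_le_exp s; linarith
  have hϱα : 0 < ϱ₀ ^ (-α) := Real.rpow_pos_of_pos hϱ₀ _
  have hbq0 : 0 < b ^ (1 / q) := Real.rpow_pos_of_pos hb0 _
  -- chain of inequalities
  have key : R ^ (-α) ≤ ϱ₀ ^ (-α) * m * (Real.exp s * Real.exp s) := by
    have step1 : R ^ (-α) ≤ ϱ₀ ^ (-α) * (b ^ (1 / q) * s + 1) * Real.exp s := by
      calc R ^ (-α) ≤ (a / μ) ^ (1 / q) * (Real.exp s - 1)
            + ϱ₀ ^ (-α) * Real.exp s := h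
        _ ≤ (a / μ) ^ (1 / q) * (s * Real.exp s) + ϱ₀ ^ (-α) * Real.exp s :=
            add_le_add_left (mul_le_mul_of_nonneg_left hexp1
              (Real.rpow_pos_of_pos hc (1 / q)).le) _
        _ = ϱ₀ ^ (-α) * (b ^ (1 / q) * s + 1) * Real.exp s := by
            rw [hcq]; ring
    have step2 : b ^ (1 / q) * s + 1 ≤ m * Real.exp s := by
      have hbm : b ^ (1 / q) ≤ m := le_max_right _ _
      calc b ^ (1 / q) * s + 1 ≤ m * s + m :=
            add_le_add (mul_le_mul_of_nonneg_right hbm hs0) hm1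
        _ = m * (1 + s) := by ring
        _ ≤ m * Real.exp s := mul_le_mul_of_nonneg_left hexp2 hm0.le
    calc R ^ (-α) ≤ ϱ₀ ^ (-α) * (b ^ (1 / q) * s + 1) * Real.exp s := step1
      _ ≤ ϱ₀ ^ (-α) * (m * Real.exp s) * Real.exp s :=
          mul_le_mul_of_nonneg_right (mul_le_mul_of_nonneg_left step2 hϱα.le)
            (Real.exp_pos s).le
      _ = ϱ₀ ^ (-α) * m * (Real.exp s * Real.exp s) := by ring
  -- compute L ^ (-α)
  set L := ϱ₀ * Real.exp (-(2 * t)) / M with hLdef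
  have hL0 : 0 < L := by positivity
  have hLval : L ^ (-α) = ϱ₀ ^ (-α) * m * (Real.exp s * Real.exp s) := by
    rw [hLdef, Real.div_rpow (by positivity) hM0.le,
      Real.mul_rpow hϱ₀.le (Real.exp_pos _).le,
      ← Real.exp_mul, Real.rpow_neg hM0.le]
    have : Real.exp (-(2 * t) * -α) = Real.exp s * Real.exp s := by
      rw [← Real.exp_add]
      congr 1
      rw [hsdef, hαdef]
      ring
    rw [this, hMα, div_eq_mul_inv, inv_inv]
    ring
  have hfin : R ^ (-α) ≤ L ^ (-α) := by rw [hLval]; exact key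
  by_contra hcon
  push_neg at hcon
  have : L ^ (-α) < R ^ (-α) :=
    Real.rpow_lt_rpow_of_neg hR hcon (by linarith)
  linarith
end

section
/- Let q > 1 be real, let k ≥ 1 be real, and let T : ℝ → ℝ be continuous and nondecreasing on [0, ∞) with T(z) = z for 0 ≤ z ≤ k and T(z) ≤ min{z, k+1} for z ≥ k. Define P(ϱ) = ϱ ∫₀^ϱ T(z)^q / z² dz for ϱ ≥ 0. Then for every ϱ ≥ 0, P(ϱ) ≥ (k/(k+1))^{q-1} · (1/(q−1)) · T(ϱ)^q. -/
open intervalIntegral MeasureTheory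

/-- The integrand `z^q / z²` agrees with `z^(q-2)` on `Ι 0 c`. -/
private lemma eq_on_uIoc (q c : ℝ) (hc : 0 ≤ c) :
    ∀ z ∈ Set.uIoc (0:ℝ) c, z ^ q / z ^ 2 = z ^ (q - 2) := by
  intro z hz
  rw [Set.uIoc_of_le hc] at hz
  have hz0 : 0 < z := hz.1
  rw [Real.rpow_sub hz0, Real.rpow_two]

private lemma aux_integral (q c : ℝ) (hq : 1 < q) (hc : 0 ≤ c) :
    ∫ z in (0:ℝ)..c, z ^ q / z ^ 2 = c ^ (q - 1) / (q - 1) := by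
  have h1 : ∫ z in (0:ℝ)..c, z ^ (q - 2)
      = (c ^ (q - 2 + 1) - (0:ℝ) ^ (q - 2 + 1)) / (q - 2 + 1) :=
    integral_rpow (Or.inl (by linarith))
  have h2 : (∫ z in (0:ℝ)..c, z ^ q / z ^ 2) = ∫ z in (0:ℝ)..c, z ^ (q - 2) :=
    intervalIntegral.integral_congr_ae
      (MeasureTheory.ae_of_all _ (eq_on_uIoc q c hc))
  rw [h2, h1, Real.zero_rpow (by norm_num; linarith)]
  norm_num
  ring_nf

private lemma aux_integrable (q c : ℝ) (hq : 1 < q) (hc : 0 ≤ c) :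
    IntervalIntegrable (fun z => z ^ q / z ^ 2) MeasureTheory.volume 0 c := by
  have h := intervalIntegral.intervalIntegrable_rpow' (a := 0) (b := c)
    (r := q - 2) (by linarith)
  apply h.congr
  intro z hz
  exact (eq_on_uIoc q c hc z hz).symm

/-- For a truncation operator `T` at level `k` and `q > 1`, the renormalization
    `P(ϱ) = ϱ ∫₀^ϱ T(z)^q / z² dz` satisfies
    `P(ϱ) ≥ (k/(k+1))^{q-1} (1/(q−1)) T(ϱ)^q` for all `ϱ ≥ 0`. -/
theorem truncation_renormalization_bound (q k : ℝ) (hq : 1 < q) (hk : 1 ≤ k)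
    (T : ℝ → ℝ) (hTcont : ContinuousOn T (Set.Ici 0)) (hTmono : MonotoneOn T (Set.Ici 0))
    (hTid : ∀ z, 0 ≤ z → z ≤ k → T z = z)
    (hTbound : ∀ z, k ≤ z → T z ≤ min z (k + 1)) :
    ∀ ϱ ≥ (0 : ℝ),
      (k / (k + 1)) ^ (q - 1) * (1 / (q - 1)) * (T ϱ) ^ q
        ≤ ϱ * ∫ z in (0 : ℝ)..ϱ, (T z) ^ q / z ^ 2 := by
  intro ϱ hϱ
  have hq1 : (0:ℝ) < q - 1 := by linarith
  have hk0 : (0:ℝ) < k := by linarith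
  have hk1 : (0:ℝ) < k + 1 := by linarith
  have hT0 : T 0 = 0 := hTid 0 le_rfl hk0.le
  have hTnn : ∀ z, 0 ≤ z → 0 ≤ T z := fun z hz => by
    have := hTmono (Set.mem_Ici.mpr le_rfl) (Set.mem_Ici.mpr hz) hz
    rwa [hT0] at this
  have hBpos : (0:ℝ) < (k + 1) ^ (q - 1) := Real.rpow_pos_of_pos hk1 _
  have hApos : (0:ℝ) < k ^ (q - 1) := Real.rpow_pos_of_pos hk0 _
  have hdiv : (k / (k + 1)) ^ (q - 1) = k ^ (q - 1) / (k + 1) ^ (q - 1) :=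
    Real.div_rpow hk0.le hk1.le (q - 1)
  rcases le_or_gt ϱ k with hcase | hcase
  · -- case ϱ ≤ k : T z = z on [0, ϱ]
    have hint : (∫ z in (0:ℝ)..ϱ, (T z) ^ q / z ^ 2) = ϱ ^ (q - 1) / (q - 1) := by
      rw [← aux_integral q ϱ hq hϱ]
      apply intervalIntegral.integral_congr
      intro z hz
      rw [Set.uIcc_of_le hϱ] at hz
      show T z ^ q / z ^ 2 = z ^ q / z ^ 2
      rw [hTid z hz.1 (le_trans hz.2 hcase)]
    rw [hint, hTid ϱ hϱ hcase]
    rcases eq_or_lt_of_le hϱ with h0 | h0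
    · rw [← h0, Real.zero_rpow (by linarith), Real.zero_rpow (by linarith)]
      simp
    · have hpow : ϱ ^ q = ϱ * ϱ ^ (q - 1) := by
        conv_lhs => rw [show q = 1 + (q - 1) by ring]
        rw [Real.rpow_add h0, Real.rpow_one]
      have hmul : ϱ * (ϱ ^ (q - 1) / (q - 1)) = ϱ ^ q / (q - 1) := by
        rw [hpow]; ring
      rw [hmul]
      have hfrac1 : (k / (k + 1)) ^ (q - 1) ≤ 1 :=
        Real.rpow_le_one (by positivity) (by rw [div_le_one hk1]; linarith) hq1.le
      have hϱq : (0:ℝ) ≤ ϱ ^ q := Real.rpow_nonneg hϱ.le _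
      calc (k / (k + 1)) ^ (q - 1) * (1 / (q - 1)) * ϱ ^ q
          = (k / (k + 1)) ^ (q - 1) * ϱ ^ q * (1 / (q - 1)) := by ring
        _ ≤ 1 * ϱ ^ q * (1 / (q - 1)) := by
            apply mul_le_mul_of_nonneg_right
            · exact mul_le_mul_of_nonneg_right hfrac1 hϱq
            · positivity
        _ = ϱ ^ q / (q - 1) := by ring
  · -- case k < ϱ
    have hint_k : (∫ z in (0:ℝ)..k, (T z) ^ q / z ^ 2) = k ^ (q - 1) / (q - 1) := by
      rw [← aux_integral q k hq hk0.le]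
      apply intervalIntegral.integral_congr
      intro z hz
      rw [Set.uIcc_of_le hk0.le] at hz
      show T z ^ q / z ^ 2 = z ^ q / z ^ 2
      rw [hTid z hz.1 hz.2]
    -- integrability on [0, k]
    have hI1 : IntervalIntegrable (fun z => (T z) ^ q / z ^ 2)
        MeasureTheory.volume 0 k := by
      apply (aux_integrable q k hq hk0.le).congr
      intro z hz
      dsimp only
      rw [Set.uIoc_of_le hk0.le] at hz
      rw [hTid z hz.1.le hz.2]
    -- integrability on [k, ϱ] by continuity
    have hI2 : IntervalIntegrable (fun z => (T z) ^ q / z ^ 2)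
        MeasureTheory.volume k ϱ := by
      apply ContinuousOn.intervalIntegrable
      rw [Set.uIcc_of_le hcase.le]
      have hsub : Set.Icc k ϱ ⊆ Set.Ici (0:ℝ) := fun z hz => le_trans hk0.le hz.1
      apply ContinuousOn.div
      · exact (hTcont.mono hsub).rpow_const (fun x _ => Or.inr (by linarith))
      · exact (continuous_pow 2).continuousOn
      · intro z hz
        have : (0:ℝ) < z := lt_of_lt_of_le hk0 hz.1
        positivity
    have hsplit : (∫ z in (0:ℝ)..ϱ, (T z) ^ q / z ^ 2)
        = (∫ z in (0:ℝ)..k, (T z) ^ q / z ^ 2) + ∫ z in k..ϱ, (T z) ^ q / z ^ 2 :=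
      (intervalIntegral.integral_add_adjacent_intervals hI1 hI2).symm
    have hI2nn : (0:ℝ) ≤ ∫ z in k..ϱ, (T z) ^ q / z ^ 2 := by
      apply intervalIntegral.integral_nonneg hcase.le
      intro z hz
      have hz0 : (0:ℝ) ≤ z := le_trans hk0.le hz.1
      have := hTnn z hz0
      positivity
    rw [hsplit, hint_k]
    -- bound the left-hand side
    set m := min ϱ (k + 1) with hm
    have hTb : T ϱ ≤ m := hTbound ϱ hcase.le
    have hm0 : 0 < m := lt_min (lt_trans hk0 hcase) hk1
    have hTq : (T ϱ) ^ q ≤ m ^ q :=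
      Real.rpow_le_rpow (hTnn ϱ hϱ) hTb (by linarith)
    have hmq : m ^ q ≤ (k + 1) ^ (q - 1) * ϱ := by
      have h1 : m ^ q = m ^ (q - 1) * m := by
        conv_lhs => rw [show q = (q - 1) + 1 by ring]
        rw [Real.rpow_add hm0, Real.rpow_one]
      rw [h1]
      apply mul_le_mul
      · exact Real.rpow_le_rpow hm0.le (min_le_right _ _) hq1.le
      · exact min_le_left _ _
      · exact hm0.le
      · exact hBpos.le
    have key : (k / (k + 1)) ^ (q - 1) * (1 / (q - 1)) * (T ϱ) ^ q
        ≤ ϱ * (k ^ (q - 1) / (q - 1)) := by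
      rw [hdiv]
      have hchain : (T ϱ) ^ q ≤ (k + 1) ^ (q - 1) * ϱ := le_trans hTq hmq
      have h2 : k ^ (q - 1) / (k + 1) ^ (q - 1) * (1 / (q - 1)) * (T ϱ) ^ q
          ≤ k ^ (q - 1) / (k + 1) ^ (q - 1) * (1 / (q - 1)) * ((k + 1) ^ (q - 1) * ϱ) :=
        mul_le_mul_of_nonneg_left hchain (by positivity)
      have h3 : k ^ (q - 1) / (k + 1) ^ (q - 1) * (1 / (q - 1)) * ((k + 1) ^ (q - 1) * ϱ)
          = ϱ * (k ^ (q - 1) / (q - 1)) := by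
        field_simp
      linarith
    calc (k / (k + 1)) ^ (q - 1) * (1 / (q - 1)) * (T ϱ) ^ q
        ≤ ϱ * (k ^ (q - 1) / (q - 1)) := key
      _ ≤ ϱ * (k ^ (q - 1) / (q - 1) + ∫ z in k..ϱ, (T z) ^ q / z ^ 2) := by
          apply mul_le_mul_of_nonneg_left _ hϱ
          linarith
end

section
/- Let (α, μ) be a finite measure space, let (pₙ) be a sequence of real numbers with pₙ > 1 for all n and pₙ → ∞, let C ≥ 0, and let fₙ, f : α → ℝ be measurable functions such that ∫_α |fₙ|^{pₙ} dμ ≤ C for all n, and such that for every measurable set A ⊆ α one has ∫_A |f| dμ ≤ liminf_{n→∞} ∫_A |fₙ| dμ. Then |f| ≤ 1 μ-almost everywhere. -/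
open MeasureTheory Filter

/-- If `∫ |fₙ|^{pₙ} dμ ≤ C` uniformly with `pₙ → ∞` on a finite measure space,
    and `∫_A |f| ≤ liminf ∫_A |fₙ|` for every measurable `A`, then `|f| ≤ 1` a.e. -/
theorem limit_constraint_of_uniform_power_bound {α : Type*} [MeasurableSpace α]
    (μ : Measure α) [IsFiniteMeasure μ] (p : ℕ → ℝ) (hp1 : ∀ n, 1 < p n)
    (hp : Tendsto p atTop atTop) (C : ℝ) (hC : 0 ≤ C)
    (f : α → ℝ) (fn : ℕ → α → ℝ) (hf : Measurable f) (hfn : ∀ n, Measurable (fn n))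
    (hbound : ∀ n, ∫⁻ x, ENNReal.ofReal (|fn n x| ^ (p n)) ∂μ ≤ ENNReal.ofReal C)
    (hliminf : ∀ A : Set α, MeasurableSet A →
      ∫⁻ x in A, ENNReal.ofReal |f x| ∂μ
        ≤ liminf (fun n => ∫⁻ x in A, ENNReal.ofReal |fn n x| ∂μ) atTop) :
    ∀ᵐ x ∂μ, |f x| ≤ 1 := by
  have key : ∀ η : ℝ, 0 < η → μ {x | 1 + η ≤ |f x|} = 0 := by
    intro η hη
    set a : ℝ := 1 + η / 2 with ha
    have ha1 : 1 < a := by rw [ha]; linarith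
    have ha0 : (0:ℝ) < a := by linarith
    set A : Set α := {x | 1 + η ≤ |f x|} with hA
    have hAm : MeasurableSet A := measurableSet_le measurable_const hf.abs
    have hμA : μ A ≠ ⊤ := measure_ne_top μ A
    -- Step 1: (1+η) μ(A) ≤ ∫_A |f|
    have h1 : ENNReal.ofReal (1 + η) * μ A ≤ ∫⁻ x in A, ENNReal.ofReal |f x| ∂μ := by
      rw [← setLIntegral_const]
      exact setLIntegral_mono hf.abs.ennreal_ofReal fun x hx =>
        ENNReal.ofReal_le_ofReal hx
    -- Step 2: ∫_A |fn| ≤ a μ(A) + C / a^(p n - 1)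
    have h2 : ∀ n, ∫⁻ x in A, ENNReal.ofReal |fn n x| ∂μ
        ≤ ENNReal.ofReal a * μ A + ENNReal.ofReal (C / a ^ (p n - 1)) := by
      intro n
      have hb : (0:ℝ) < a ^ (p n - 1) := Real.rpow_pos_of_pos ha0 _
      have hgm : Measurable fun x => ENNReal.ofReal (|fn n x| ^ p n) :=
        ((hfn n).abs.pow_const (p n)).ennreal_ofReal
      have hpt : ∀ x, ENNReal.ofReal |fn n x| ≤
          ENNReal.ofReal a +
            ENNReal.ofReal (|fn n x| ^ p n) / ENNReal.ofReal (a ^ (p n - 1)) := by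
        intro x
        rcases le_or_gt (|fn n x|) a with h | h
        · exact le_add_of_le_of_nonneg (ENNReal.ofReal_le_ofReal h) (zero_le)
        · have ht0 : (0:ℝ) < |fn n x| := lt_trans ha0 h
          have hreal : |fn n x| ≤ |fn n x| ^ p n / a ^ (p n - 1) := by
            rw [le_div_iff₀ hb]
            calc |fn n x| * a ^ (p n - 1)
                ≤ |fn n x| * |fn n x| ^ (p n - 1) := by
                  have := Real.rpow_le_rpow ha0.le h.le (by linarith [hp1 n] : (0:ℝ) ≤ p n - 1)
                  nlinarith [Real.rpow_pos_of_pos ht0 (p n - 1)]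
              _ = |fn n x| ^ (1 + (p n - 1)) := by
                  rw [Real.rpow_add ht0, Real.rpow_one]
              _ = |fn n x| ^ p n := by ring_nf
          calc ENNReal.ofReal |fn n x|
              ≤ ENNReal.ofReal (|fn n x| ^ p n / a ^ (p n - 1)) :=
                ENNReal.ofReal_le_ofReal hreal
            _ = ENNReal.ofReal (|fn n x| ^ p n) / ENNReal.ofReal (a ^ (p n - 1)) :=
                ENNReal.ofReal_div_of_pos hb
            _ ≤ _ := le_add_of_nonneg_of_le (zero_le) le_rfl
      calc ∫⁻ x in A, ENNReal.ofReal |fn n x| ∂μ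
          ≤ ∫⁻ x in A, (ENNReal.ofReal a +
              ENNReal.ofReal (|fn n x| ^ p n) / ENNReal.ofReal (a ^ (p n - 1))) ∂μ :=
            lintegral_mono fun x => hpt x
        _ = ENNReal.ofReal a * μ A +
              (∫⁻ x in A, ENNReal.ofReal (|fn n x| ^ p n) ∂μ) / ENNReal.ofReal (a ^ (p n - 1)) := by
            rw [lintegral_add_left measurable_const, setLIntegral_const]
            congr 1
            simp only [div_eq_mul_inv]
            exact lintegral_mul_const _ hgm
        _ ≤ ENNReal.ofReal a * μ A + ENNReal.ofReal C / ENNReal.ofReal (a ^ (p n - 1)) := by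
            gcongr
            exact le_trans (setLIntegral_le_lintegral A _) (hbound n)
        _ = ENNReal.ofReal a * μ A + ENNReal.ofReal (C / a ^ (p n - 1)) := by
            rw [ENNReal.ofReal_div_of_pos hb]
    -- Step 3: the bound tends to a * μ(A)
    have h3 : Tendsto (fun n => ENNReal.ofReal a * μ A + ENNReal.ofReal (C / a ^ (p n - 1)))
        atTop (nhds (ENNReal.ofReal a * μ A)) := by
      have hbase : Tendsto (fun y : ℝ => a ^ y) atTop atTop := by
        simp_rw [Real.rpow_def_of_pos ha0]
        exact Real.tendsto_exp_atTop.comp (Tendsto.const_mul_atTop (Real.log_pos ha1) tendsto_id)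
      have hpow : Tendsto (fun n => a ^ (p n - 1)) atTop atTop :=
        hbase.comp (tendsto_atTop_add_const_right atTop (-1) hp)
      have hdiv : Tendsto (fun n => C / a ^ (p n - 1)) atTop (nhds 0) :=
        Tendsto.div_atTop tendsto_const_nhds hpow
      have : Tendsto (fun n => ENNReal.ofReal (C / a ^ (p n - 1))) atTop (nhds 0) := by
        rw [← ENNReal.ofReal_zero]
        exact (ENNReal.continuous_ofReal.tendsto 0).comp hdiv
      simpa using tendsto_const_nhds.add this
    -- Step 4: combine
    have h4 : ENNReal.ofReal (1 + η) * μ A ≤ ENNReal.ofReal a * μ A := by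
      refine le_trans (le_trans h1 (hliminf A hAm)) ?_
      calc liminf (fun n => ∫⁻ x in A, ENNReal.ofReal |fn n x| ∂μ) atTop
          ≤ liminf (fun n => ENNReal.ofReal a * μ A + ENNReal.ofReal (C / a ^ (p n - 1))) atTop :=
            liminf_le_liminf (Eventually.of_forall h2)
        _ = ENNReal.ofReal a * μ A := h3.liminf_eq
    by_contra hne
    have hlt : ENNReal.ofReal a * μ A < ENNReal.ofReal (1 + η) * μ A := by
      rw [mul_comm (ENNReal.ofReal a), mul_comm (ENNReal.ofReal (1 + η))]
      refine ENNReal.mul_lt_mul_right hne hμA ?_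
      exact ENNReal.ofReal_lt_ofReal_iff (by linarith) |>.mpr (by rw [ha]; linarith)
    exact absurd h4 (not_le.mpr hlt)
  rw [ae_iff]
  have hsub : {x | ¬ |f x| ≤ 1} ⊆ ⋃ k : ℕ, {x | 1 + 1 / (k + 1 : ℝ) ≤ |f x|} := by
    intro x hx
    simp only [Set.mem_setOf_eq, not_le] at hx
    obtain ⟨k, hk⟩ := exists_nat_one_div_lt (sub_pos.mpr hx)
    exact Set.mem_iUnion.mpr ⟨k, by simp only [Set.mem_setOf_eq]; push_cast at hk ⊢; linarith⟩
  refine measure_mono_null hsub (measure_iUnion_null fun k => key _ ?_)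
  positivity
end

section
/- Let u : ℝ → ℝ be twice continuously differentiable and periodic with period 1, with |u'(x)| < 1 for all x. Then −∫₀¹ u(x) u'(x) · d/dx( u'(x)/√(1 − u'(x)²) ) dx = ∫₀¹ u'(x)/√(1 − u'(x)²) dx. -/
/-- Periodic integration-by-parts identity for the singular (thick fluid) stress:
    if `u` is twice continuously differentiable, 1-periodic and `|u'| < 1`, then
    `−∫₀¹ u u' ∂ₓ( u'/√(1−u'²) ) = ∫₀¹ u'/√(1−u'²)`. -/
theorem singular_convective_identity (u : ℝ → ℝ) (hu : ContDiff ℝ 2 u)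
    (hper : Function.Periodic u 1) (hlt : ∀ x, |deriv u x| < 1) :
    -∫ x in (0 : ℝ)..1,
        u x * deriv u x
          * deriv (fun y => deriv u y / Real.sqrt (1 - (deriv u y) ^ 2)) x
      = ∫ x in (0 : ℝ)..1, deriv u x / Real.sqrt (1 - (deriv u x) ^ 2) := by
  set v := deriv u with hv
  have hu1 : ContDiff ℝ 1 u := hu.of_le one_le_two
  have hud : Differentiable ℝ u := hu1.differentiable one_ne_zero
  have hvc1 : ContDiff ℝ 1 v := (contDiff_succ_iff_deriv.mp (by exact_mod_cast hu : ContDiff ℝ (1+1) u)).2.2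
  have hvd : Differentiable ℝ v := hvc1.differentiable one_ne_zero
  have hvper : Function.Periodic v 1 := by
    intro x
    have h1 : (fun y => u (y + 1)) = u := funext fun y => hper y
    calc v (x + 1) = deriv (fun y => u (y + 1)) x := (deriv_comp_add_const u 1 x).symm
    _ = v x := by rw [h1]
  have hpos : ∀ x, 0 < 1 - v x ^ 2 := by
    intro x
    have h := hlt x
    nlinarith [abs_nonneg (v x), sq_abs (v x)]
  have hsq : ∀ x, Real.sqrt (1 - v x ^ 2) ^ 2 = 1 - v x ^ 2 := fun x => Real.sq_sqrt (hpos x).le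
  have hsne : ∀ x, Real.sqrt (1 - v x ^ 2) ≠ 0 := fun x => (Real.sqrt_pos.mpr (hpos x)).ne'
  have hS : ∀ x, HasDerivAt (fun y => Real.sqrt (1 - v y ^ 2))
      (-(v x * deriv v x) / Real.sqrt (1 - v x ^ 2)) x := by
    intro x
    have h1 : HasDerivAt (fun y => 1 - v y ^ 2) (-(2 * v x * deriv v x)) x := by
      have h2 := ((hvd x).hasDerivAt.pow 2)
      have := (hasDerivAt_const x (1:ℝ)).sub h2
      refine this.congr_deriv ?_
      symm
      push_cast
      ring
    have h2 := (Real.hasDerivAt_sqrt (hpos x).ne').comp x h1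
    refine h2.congr_deriv ?_
    symm
    field_simp
  have hW : ∀ x, HasDerivAt (fun y => v y / Real.sqrt (1 - v y ^ 2))
      ((deriv v x * Real.sqrt (1 - v x ^ 2) -
        v x * (-(v x * deriv v x) / Real.sqrt (1 - v x ^ 2))) / Real.sqrt (1 - v x ^ 2) ^ 2) x :=
    fun x => ((hvd x).hasDerivAt).div (hS x) (hsne x)
  have hderivW : ∀ x, deriv (fun y => v y / Real.sqrt (1 - v y ^ 2)) x
      = (deriv v x * Real.sqrt (1 - v x ^ 2) -
        v x * (-(v x * deriv v x) / Real.sqrt (1 - v x ^ 2))) / Real.sqrt (1 - v x ^ 2) ^ 2 :=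
    fun x => (hW x).deriv
  have hH : ∀ x, HasDerivAt (fun y => u y / Real.sqrt (1 - v y ^ 2))
      (u x * v x * deriv (fun y => v y / Real.sqrt (1 - v y ^ 2)) x
        + v x / Real.sqrt (1 - v x ^ 2)) x := by
    intro x
    have h := ((hud x).hasDerivAt).div (hS x) (hsne x)
    refine h.congr_deriv ?_
    symm
    rw [hderivW x]
    have hs := hsq x
    have hn := hsne x
    rw [← hv]
    field_simp
    linear_combination (u x * v x * deriv v x) * hs
  have hcu : Continuous u := hud.continuous
  have hcv : Continuous v := hvd.continuous
  have hcv' : Continuous (deriv v) := hvc1.continuous_deriv le_rfl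
  have hcs : Continuous (fun x => Real.sqrt (1 - v x ^ 2)) :=
    (continuous_const.sub (hcv.pow 2)).sqrt
  have hcW' : Continuous (fun x => deriv (fun y => v y / Real.sqrt (1 - v y ^ 2)) x) := by
    have heq : (fun x => deriv (fun y => v y / Real.sqrt (1 - v y ^ 2)) x)
        = fun x => (deriv v x * Real.sqrt (1 - v x ^ 2) -
          v x * (-(v x * deriv v x) / Real.sqrt (1 - v x ^ 2))) / Real.sqrt (1 - v x ^ 2) ^ 2 :=
      funext hderivW
    rw [heq]
    exact ((hcv'.mul hcs).sub (hcv.mul (((hcv.mul hcv').neg).div hcs hsne))).div (hcs.pow 2)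
      (fun x => pow_ne_zero 2 (hsne x))
  have hA : Continuous (fun x => u x * v x * deriv (fun y => v y / Real.sqrt (1 - v y ^ 2)) x) :=
    (hcu.mul hcv).mul hcW'
  have hB : Continuous (fun x => v x / Real.sqrt (1 - v x ^ 2)) := hcv.div hcs hsne
  have hFTC := intervalIntegral.integral_eq_sub_of_hasDerivAt (a := (0:ℝ)) (b := 1)
    (fun x _ => hH x) ((hA.add hB).intervalIntegrable 0 1)
  have hHper : u 1 / Real.sqrt (1 - v 1 ^ 2) - u 0 / Real.sqrt (1 - v 0 ^ 2) = 0 := by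
    have h1 : u 1 = u 0 := by simpa using hper 0
    have h2 : v 1 = v 0 := by simpa using hvper 0
    rw [h1, h2]; ring
  rw [intervalIntegral.integral_add (hA.intervalIntegrable 0 1) (hB.intervalIntegrable 0 1)]
    at hFTC
  rw [hHper] at hFTC
  linarith
end

section
/- Let (α, μ) be a finite measure space and let f : α → ℝ be measurable with |f| ≤ 1 μ-almost everywhere. Then ∫_α | |f(x)|^{p-2} f(x) − f(x)·𝟙_{\{|f(x)| = 1\}}(x) | dμ(x) → 0 as the real parameter p → ∞. -/
open MeasureTheory Filter

/-- Strong `L¹` convergence of the power-law nonlinearity: if `|f| ≤ 1` a.e. on a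
    finite measure space, then `∫ | |f|^{p-2} f − f·𝟙_{|f|=1} | dμ → 0` as `p → ∞`. -/
theorem power_nonlinearity_L1_convergence {α : Type*} [MeasurableSpace α]
    (μ : Measure α) [IsFiniteMeasure μ] (f : α → ℝ) (hf : Measurable f)
    (hf1 : ∀ᵐ x ∂μ, |f x| ≤ 1) :
    Tendsto
      (fun p : ℝ => ∫ x, |(|f x| ^ (p - 2) * f x
        - Set.indicator {x : α | |f x| = 1} f x)| ∂μ)
      atTop (nhds 0) := by
  have hset : MeasurableSet {x : α | |f x| = 1} := hf.abs (measurableSet_singleton 1)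
  have key := tendsto_integral_filter_of_dominated_convergence (μ := μ)
    (F := fun p x => |(|f x| ^ (p - 2) * f x - Set.indicator {x : α | |f x| = 1} f x)|)
    (f := fun _ => (0 : ℝ)) (bound := fun _ => 2) (l := (atTop : Filter ℝ))
    (Eventually.of_forall fun p => by
      apply Measurable.aestronglyMeasurable
      exact (((hf.abs.pow_const _).mul hf).sub (hf.indicator hset)).abs)
    (by
      filter_upwards [eventually_ge_atTop (2 : ℝ)] with p hp
      filter_upwards [hf1] with x hx
      have h1 : |f x| ^ (p - 2) ≤ 1 :=
        Real.rpow_le_one (abs_nonneg _) hx (by linarith)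
      have h2 : |(|f x| ^ (p - 2) * f x)| ≤ 1 := by
        rw [abs_mul, abs_of_nonneg (Real.rpow_nonneg (abs_nonneg _) _)]
        calc |f x| ^ (p - 2) * |f x| ≤ 1 * 1 := by
              apply mul_le_mul h1 hx (abs_nonneg _) zero_le_one
          _ = 1 := by ring
      have h3 : |Set.indicator {x : α | |f x| = 1} f x| ≤ 1 := by
        by_cases hmem : x ∈ {x : α | |f x| = 1}
        · rw [Set.indicator_of_mem hmem]; exact hx
        · rw [Set.indicator_of_notMem hmem]; simp
      have := abs_sub (|f x| ^ (p - 2) * f x) (Set.indicator {x : α | |f x| = 1} f x)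
      simp only [Real.norm_eq_abs, abs_abs]
      linarith)
    (integrable_const 2)
    (by
      filter_upwards [hf1] with x hx
      by_cases h : |f x| = 1
      · have hmem : x ∈ {x : α | |f x| = 1} := h
        simp only [Set.indicator_of_mem hmem, h, Real.one_rpow, one_mul, sub_self, abs_zero]
        exact tendsto_const_nhds
      · have hmem : x ∉ {x : α | |f x| = 1} := h
        simp only [Set.indicator_of_notMem hmem, sub_zero]
        have hlt : |f x| < 1 := lt_of_le_of_ne hx h
        have hbase : Tendsto (fun p : ℝ => |f x| ^ (p - 2)) atTop (nhds 0) := by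
          have := tendsto_rpow_atTop_of_base_lt_one (|f x|)
            (by have := abs_nonneg (f x); linarith) hlt
          exact this.comp (tendsto_atTop_add_const_right atTop (-2) tendsto_id)
        have hmul : Tendsto (fun p : ℝ => |f x| ^ (p - 2) * f x) atTop (nhds 0) := by
          have := hbase.mul_const (f x)
          simpa using this
        have := (continuous_abs.tendsto 0).comp hmul
        simpa [Function.comp_def] using this)
  simpa using key
end
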